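/- Let T > 0, let U : [0,T] → ℝ be continuous and let s ∈ (0,T]. If x, y : [0,s) → ℝ are backward solutions of the backward chordal Loewner equation on [0,s) which both hit the singularity at time s (i.e. x(t) → U(T−s) and y(t) → U(T−s) as t → s⁻) and x(0) < y(0), then x(0) < U(T) < y(0). Consequently, there exist at most two real numbers x₀ such that some backward solution on [0,s) with initial value x₀ hits the singularity at time s, and if there are two, then one is smaller than U(T) and the other is larger than U(T). -/

import Mathlib

/-- A backward solution of the backward chordal Loewner equation on `[0,s)` for the
driving function `U : [0,T] → ℝ`. -/
def IsBackwardSol (U : ℝ → ℝ) (T s : ℝ) (x : ℝ → ℝ) : Prop :=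
  ∀ t ∈ Set.Ico (0 : ℝ) s, x t ≠ U (T - t) ∧
    HasDerivWithinAt x (-2 / (x t - U (T - t))) (Set.Ico 0 s) t

/-- The backward solution `x` hits the singularity at time `s`, i.e.
`x(t) → U(T−s)` as `t → s⁻`. -/
def HitsSingularity (U : ℝ → ℝ) (T s : ℝ) (x : ℝ → ℝ) : Prop :=
  Filter.Tendsto x (nhdsWithin s (Set.Iio s)) (nhds (U (T - s)))

open Set Filter

/-- Sign constancy: a continuous nowhere-zero function on `Ico 0 s` has constant sign. -/
lemma sign_const {s : ℝ} (hs : 0 < s) {g : ℝ → ℝ} (hg : ContinuousOn g (Set.Ico 0 s))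
    (hne : ∀ t ∈ Set.Ico (0 : ℝ) s, g t ≠ 0) :
    ∀ t ∈ Set.Ico (0 : ℝ) s, 0 < g 0 * g t := by
  intro t ht
  by_contra h
  push_neg at h
  have h0 : (0 : ℝ) ∈ Set.Ico (0 : ℝ) s := ⟨le_refl 0, hs⟩
  have hgt : g t ≠ 0 := hne t ht
  have hg0 : g 0 ≠ 0 := hne 0 h0
  have hlt : g 0 * g t < 0 := lt_of_le_of_ne h (mul_ne_zero hg0 hgt)
  have hsub : Set.uIcc (0 : ℝ) t ⊆ Set.Ico 0 s := by
    rw [Set.uIcc_of_le ht.1]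
    exact fun c hc => ⟨hc.1, lt_of_le_of_lt hc.2 ht.2⟩
  have hmem : (0 : ℝ) ∈ Set.uIcc (g 0) (g t) := by
    rcases lt_or_ge (g 0) 0 with h1 | h1
    · have : 0 < g t := by nlinarith
      exact Set.mem_uIcc.2 (Or.inl ⟨h1.le, this.le⟩)
    · have hg0' : 0 < g 0 := lt_of_le_of_ne h1 (Ne.symm hg0)
      have : g t < 0 := by nlinarith
      exact Set.mem_uIcc.2 (Or.inr ⟨this.le, hg0'.le⟩)
  obtain ⟨c, hc, hgc⟩ := intermediate_value_uIcc (hg.mono hsub) hmem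
  exact hne c (hsub hc) hgc

/-- Core lemma: two backward solutions that both hit the singularity straddle `U T`. -/
lemma core (T : ℝ) (U : ℝ → ℝ) (hU : ContinuousOn U (Set.Icc 0 T))
    (s : ℝ) (hs : s ∈ Set.Ioc 0 T) (x y : ℝ → ℝ)
    (hx : IsBackwardSol U T s x) (hy : IsBackwardSol U T s y)
    (hxhit : HitsSingularity U T s x) (hyhit : HitsSingularity U T s y)
    (hxy : x 0 < y 0) : x 0 < U T ∧ U T < y 0 := by
  have h0 : (0 : ℝ) ∈ Set.Ico (0 : ℝ) s := ⟨le_refl 0, hs.1⟩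
  have hUT0 : U (T - 0) = U T := by norm_num
  have hx0 : x 0 ≠ U T := by have := (hx 0 h0).1; rwa [hUT0] at this
  have hy0 : y 0 ≠ U T := by have := (hy 0 h0).1; rwa [hUT0] at this
  by_contra hcon
  push_neg at hcon
  -- either both initial values are above U T or both below
  have hsame : 0 < (x 0 - U T) * (y 0 - U T) := by
    rcases lt_or_ge (x 0) (U T) with h1 | h1
    · have h2 : y 0 < U T := lt_of_le_of_ne (hcon h1) hy0
      nlinarith
    · have h1' : U T < x 0 := lt_of_le_of_ne h1 (Ne.symm hx0)
      nlinarith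
  -- continuity of t ↦ U (T - t) on Ico 0 s
  have hsub : ∀ t ∈ Set.Ico (0 : ℝ) s, T - t ∈ Set.Icc (0 : ℝ) T := by
    intro t ht
    exact ⟨by linarith [ht.2, hs.2], by linarith [ht.1]⟩
  have hUc : ContinuousOn (fun t => U (T - t)) (Set.Ico 0 s) :=
    hU.comp ((continuous_const.sub continuous_id).continuousOn) hsub
  have hxc : ContinuousOn x (Set.Ico 0 s) :=
    fun t ht => ((hx t ht).2).continuousWithinAt
  have hyc : ContinuousOn y (Set.Ico 0 s) :=
    fun t ht => ((hy t ht).2).continuousWithinAt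
  -- constant signs
  have hxsign := sign_const hs.1 (hxc.sub hUc) (fun t ht => sub_ne_zero.2 (hx t ht).1)
  have hysign := sign_const hs.1 (hyc.sub hUc) (fun t ht => sub_ne_zero.2 (hy t ht).1)
  -- product (x t - U(T-t)) * (y t - U(T-t)) > 0 on Ico 0 s
  have hprod : ∀ t ∈ Set.Ico (0 : ℝ) s, 0 < (x t - U (T - t)) * (y t - U (T - t)) := by
    intro t ht
    have h1 := hxsign t ht
    have h2 := hysign t ht
    have h3 : (x 0 - U (T - 0)) = x 0 - U T := by rw [hUT0]
    have h4 : (y 0 - U (T - 0)) = y 0 - U T := by rw [hUT0]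
    simp only [Pi.sub_apply] at h1 h2
    rw [h3] at h1
    rw [h4] at h2
    nlinarith
  -- f = (y - x)^2 is monotone on Ico 0 s
  set f : ℝ → ℝ := fun t => (y t - x t) ^ 2 with hf
  have hint : interior (Set.Ico (0 : ℝ) s) = Set.Ioo 0 s := interior_Ico
  have hmono : MonotoneOn f (Set.Ico 0 s) := by
    apply monotoneOn_of_hasDerivWithinAt_nonneg (convex_Ico 0 s)
      ((hyc.sub hxc).pow 2)
      (f' := fun t => 2 * (y t - x t) ^ (2 - 1) *
        ((-2 / (y t - U (T - t))) - (-2 / (x t - U (T - t)))))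
    · intro t ht
      rw [hint] at ht
      have ht' : t ∈ Set.Ico (0 : ℝ) s := Set.mem_Ico.2 ⟨ht.1.le, ht.2⟩
      have hd : HasDerivWithinAt (fun t => (y t - x t) ^ 2)
          (2 * (y t - x t) ^ (2 - 1) *
            ((-2 / (y t - U (T - t))) - (-2 / (x t - U (T - t)))))
          (Set.Ico 0 s) t := (((hy t ht').2).sub ((hx t ht').2)).pow 2
      exact hd.mono interior_subset
    · intro t ht
      rw [hint] at ht
      have ht' : t ∈ Set.Ico (0 : ℝ) s := Set.mem_Ico.2 ⟨ht.1.le, ht.2⟩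
      set a := x t - U (T - t)
      set b := y t - U (T - t)
      have ha : a ≠ 0 := sub_ne_zero.2 (hx t ht').1
      have hb : b ≠ 0 := sub_ne_zero.2 (hy t ht').1
      have hab : 0 < a * b := hprod t ht'
      have hyx : y t - x t = b - a := by ring
      have key : 2 * (y t - x t) ^ (2 - 1) * ((-2 / b) - (-2 / a))
          = 4 * (b - a) ^ 2 / (a * b) := by
        rw [hyx]
        field_simp
        ring
      rw [key]
      positivity
  -- f tends to 0 at s from the left
  have hf0 : Filter.Tendsto f (nhdsWithin s (Set.Iio s)) (nhds 0) := by
    have := (hyhit.sub hxhit).pow 2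
    simpa using this
  -- eventually f 0 ≤ f t near s from the left
  have hev : ∀ᶠ t in nhdsWithin s (Set.Iio s), f 0 ≤ f t := by
    have h1 : Set.Ioo (0 : ℝ) s ∈ nhdsWithin s (Set.Iio s) := by
      apply mem_nhdsWithin.2
      exact ⟨Set.Ioi 0, isOpen_Ioi, hs.1, fun t ht => ⟨ht.1, ht.2⟩⟩
    filter_upwards [h1] with t ht
    exact hmono ⟨le_refl 0, hs.1⟩ ⟨ht.1.le, ht.2⟩ ht.1.le
  have : f 0 ≤ 0 := ge_of_tendsto hf0 hev
  have : 0 < f 0 := by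
    simp only [hf]
    have : y 0 - x 0 ≠ 0 := by linarith
    positivity
  linarith

/-- If two backward solutions on `[0,s)` both hit the singularity at
time `s` and `x 0 < y 0`, then `x 0 < U T < y 0`; consequently there are at most two
initial values whose solutions hit the singularity at time `s`, and any two of them
straddle `U T`. -/
theorem stmt_1 (T : ℝ) (hT : 0 < T) (U : ℝ → ℝ) (hU : ContinuousOn U (Set.Icc 0 T))
    (s : ℝ) (hs : s ∈ Set.Ioc 0 T) (x y : ℝ → ℝ)
    (hx : IsBackwardSol U T s x) (hy : IsBackwardSol U T s y)
    (hxhit : HitsSingularity U T s x) (hyhit : HitsSingularity U T s y)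
    (hxy : x 0 < y 0) :
    (x 0 < U T ∧ U T < y 0) ∧
    Set.encard {a : ℝ | ∃ z : ℝ → ℝ, z 0 = a ∧ IsBackwardSol U T s z ∧
      HitsSingularity U T s z} ≤ 2 ∧
    ∀ a ∈ {a : ℝ | ∃ z : ℝ → ℝ, z 0 = a ∧ IsBackwardSol U T s z ∧
        HitsSingularity U T s z},
      ∀ b ∈ {a : ℝ | ∃ z : ℝ → ℝ, z 0 = a ∧ IsBackwardSol U T s z ∧
        HitsSingularity U T s z},
      a < b → a < U T ∧ U T < b := by
  set S := {a : ℝ | ∃ z : ℝ → ℝ, z 0 = a ∧ IsBackwardSol U T s z ∧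
      HitsSingularity U T s z} with hS
  have hpair : ∀ a ∈ S, ∀ b ∈ S, a < b → a < U T ∧ U T < b := by
    rintro a ⟨za, rfl, hza, hzahit⟩ b ⟨zb, rfl, hzb, hzbhit⟩ hab
    exact core T U hU s hs za zb hza hzb hzahit hzbhit hab
  refine ⟨core T U hU s hs x y hx hy hxhit hyhit hxy, ?_, hpair⟩
  -- S splits into points below and above U T, each a subsingleton
  have hUnotmem : U T ∉ S := by
    rintro ⟨z, hz0, hz, _⟩
    have h0 : (0 : ℝ) ∈ Set.Ico (0 : ℝ) s := ⟨le_refl 0, hs.1⟩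
    have := (hz 0 h0).1
    rw [hz0] at this
    exact this (by norm_num)
  have hsplit : S ⊆ (S ∩ Set.Iio (U T)) ∪ (S ∩ Set.Ioi (U T)) := by
    intro a ha
    rcases lt_trichotomy a (U T) with h | h | h
    · exact Or.inl ⟨ha, h⟩
    · exact absurd (h ▸ ha) hUnotmem
    · exact Or.inr ⟨ha, h⟩
  have hlow : (S ∩ Set.Iio (U T)).Subsingleton := by
    intro a ha b hb
    by_contra hne
    rcases lt_or_gt_of_ne hne with h | h
    · exact absurd (hpair a ha.1 b hb.1 h).2 (not_lt.2 hb.2.le)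
    · exact absurd (hpair b hb.1 a ha.1 h).2 (not_lt.2 ha.2.le)
  have hhigh : (S ∩ Set.Ioi (U T)).Subsingleton := by
    intro a ha b hb
    by_contra hne
    rcases lt_or_gt_of_ne hne with h | h
    · exact absurd (hpair a ha.1 b hb.1 h).1 (not_lt.2 ha.2.le)
    · exact absurd (hpair b hb.1 a ha.1 h).1 (not_lt.2 hb.2.le)
  calc S.encard ≤ ((S ∩ Set.Iio (U T)) ∪ (S ∩ Set.Ioi (U T))).encard :=
        Set.encard_le_encard hsplit
    _ ≤ (S ∩ Set.Iio (U T)).encard + (S ∩ Set.Ioi (U T)).encard :=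
        Set.encard_union_le _ _
    _ ≤ 1 + 1 := add_le_add
        (Set.encard_le_one_iff.2 fun a b ha hb => hlow ha hb)
        (Set.encard_le_one_iff.2 fun a b ha hb => hhigh ha hb)
    _ = 2 := by norm_num
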